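/- For all distinct x, t ∈ [-1,1] one has (1/4)·W_g'((t+x)/2) ≤ (W_g(t) - W_g(x))/(t - x) ≤ π√2·W_g'((t+x)/2), where W_g'(s) = k·g(s)/(π√(1-s²)). -/

import Mathlib

open Real MeasureTheory

section Helpers
open Set intervalIntegral

lemma myNormBound (u : ℝ) : ‖1 / Real.sqrt u‖ ≤ ‖u ^ (-(1/2) : ℝ)‖ := by
  rcases le_or_gt 0 u with hu | hu
  · rw [Real.rpow_neg hu, one_div, ← Real.sqrt_eq_rpow]
  · rw [Real.sqrt_eq_zero'.2 hu.le]
    simp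

lemma II_m : IntervalIntegrable (fun s => 1 / Real.sqrt (1 - s)) volume (-1) 1 := by
  have h0 : IntervalIntegrable (fun u : ℝ => u ^ (-(1/2) : ℝ)) volume 0 2 :=
    intervalIntegral.intervalIntegrable_rpow' (by norm_num)
  have h1 : IntervalIntegrable (fun s : ℝ => (1 - s) ^ (-(1/2) : ℝ)) volume (-1) 1 := by
    have := (h0.comp_sub_left 1).symm
    norm_num at this
    exact this
  apply h1.mono_fun
  · exact (measurable_const.div (Real.continuous_sqrt.measurable.comp
      (measurable_const.sub measurable_id))).aestronglyMeasurable
  · exact Filter.Eventually.of_forall fun s => myNormBound (1 - s)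

lemma II_p : IntervalIntegrable (fun s => 1 / Real.sqrt (1 + s)) volume (-1) 1 := by
  have h0 : IntervalIntegrable (fun u : ℝ => u ^ (-(1/2) : ℝ)) volume 0 2 :=
    intervalIntegral.intervalIntegrable_rpow' (by norm_num)
  have h1 : IntervalIntegrable (fun s : ℝ => (1 + s) ^ (-(1/2) : ℝ)) volume (-1) 1 := by
    have := h0.comp_add_left 1
    norm_num at this
    exact this
  apply h1.mono_fun
  · exact (measurable_const.div (Real.continuous_sqrt.measurable.comp
      (measurable_const.add measurable_id))).aestronglyMeasurable
  · exact Filter.Eventually.of_forall fun s => myNormBound (1 + s)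

lemma sum_sqrt_ge_one {s : ℝ} (h1 : -1 < s) (h2 : s < 1) :
    1 ≤ Real.sqrt (1 - s) + Real.sqrt (1 + s) := by
  nlinarith [Real.sq_sqrt (by linarith : (0:ℝ) ≤ 1 - s),
    Real.sq_sqrt (by linarith : (0:ℝ) ≤ 1 + s),
    Real.sqrt_nonneg (1 - s), Real.sqrt_nonneg (1 + s)]

lemma II_master {F : ℝ → ℝ} {C : ℝ} (hFm : Measurable F) (hF0 : ∀ s, 0 ≤ F s)
    (hFC : ∀ s, F s ≤ C) :
    IntervalIntegrable (fun s => F s / Real.sqrt (1 - s ^ 2)) volume (-1) 1 := by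
  have hC : 0 ≤ C := le_trans (hF0 0) (hFC 0)
  have base : IntervalIntegrable
      (fun s => C * (1 / Real.sqrt (1 - s) + 1 / Real.sqrt (1 + s))) volume (-1) 1 :=
    (II_m.add II_p).const_mul C
  apply base.mono_fun
  · exact (hFm.div (Real.continuous_sqrt.measurable.comp
      (measurable_const.sub (measurable_id.pow_const 2)))).aestronglyMeasurable
  · refine Filter.Eventually.of_forall fun s => ?_
    have hR : 0 ≤ C * (1 / Real.sqrt (1 - s) + 1 / Real.sqrt (1 + s)) := by positivity
    simp only [Real.norm_eq_abs]
    rw [abs_of_nonneg (div_nonneg (hF0 s) (Real.sqrt_nonneg _)), abs_of_nonneg hR]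
    rcases le_or_gt s (-1) with hs | hs
    · rw [Real.sqrt_eq_zero'.2 (by nlinarith : (1:ℝ) - s ^ 2 ≤ 0)]
      simpa using hR
    rcases le_or_gt 1 s with hs' | hs'
    · rw [Real.sqrt_eq_zero'.2 (by nlinarith : (1:ℝ) - s ^ 2 ≤ 0)]
      simpa using hR
    have ha : 0 < Real.sqrt (1 - s) := Real.sqrt_pos.2 (by linarith)
    have hb : 0 < Real.sqrt (1 + s) := Real.sqrt_pos.2 (by linarith)
    have hsq : Real.sqrt (1 - s ^ 2) = Real.sqrt (1 - s) * Real.sqrt (1 + s) := by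
      rw [show (1:ℝ) - s ^ 2 = (1 - s) * (1 + s) by ring, Real.sqrt_mul (by linarith)]
    rw [hsq, div_add_div _ _ ha.ne' hb.ne']
    rw [mul_div_assoc']
    apply div_le_div₀ (by positivity) _ (by positivity) le_rfl
    have := sum_sqrt_ge_one hs hs'
    nlinarith [hFC s, hF0 s]

lemma ftc_m {a b : ℝ} (hm1 : -1 ≤ a) (hab : a ≤ b) (hb : b ≤ 1) :
    ∫ s in a..b, 1 / Real.sqrt (1 - s) = 2 * Real.sqrt (1 - a) - 2 * Real.sqrt (1 - b) := by
  have hsub : Set.uIcc a b ⊆ Set.uIcc (-1 : ℝ) 1 := by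
    rw [Set.uIcc_of_le hab, Set.uIcc_of_le (by norm_num : (-1:ℝ) ≤ 1)]
    exact Set.Icc_subset_Icc hm1 hb
  have hint : IntervalIntegrable (fun s => 1 / Real.sqrt (1 - s)) volume a b :=
    II_m.mono_set hsub
  have := intervalIntegral.integral_eq_sub_of_hasDeriv_right_of_le hab
    (f := fun s => -(2 * Real.sqrt (1 - s))) (f' := fun s => 1 / Real.sqrt (1 - s))
    ((continuous_const.mul (Real.continuous_sqrt.comp (continuous_const.sub continuous_id))).neg.continuousOn)
    (fun s hs => by
      have h1s : (0:ℝ) < 1 - s := by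
        rcases hs with ⟨_, h2⟩
        have : s < 1 := lt_of_lt_of_le h2 hb
        linarith
      have h1 : HasDerivAt (fun u : ℝ => 1 - u) (-1) s := by
        simpa using (hasDerivAt_id s).const_sub 1
      have h2 := (Real.hasDerivAt_sqrt h1s.ne').comp s h1
      have h3 := (h2.const_mul (2:ℝ)).neg
      have heq : -(2 * (1 / (2 * Real.sqrt (1 - s)) * -1)) = 1 / Real.sqrt (1 - s) := by
        have hsp : Real.sqrt (1 - s) ≠ 0 := (Real.sqrt_pos.2 h1s).ne'
        field_simp
      rw [heq] at h3
      exact h3.hasDerivWithinAt)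
    hint
  rw [this]; ring

lemma ftc_p {a b : ℝ} (hm1 : -1 ≤ a) (hab : a ≤ b) (hb : b ≤ 1) :
    ∫ s in a..b, 1 / Real.sqrt (1 + s) = 2 * Real.sqrt (1 + b) - 2 * Real.sqrt (1 + a) := by
  have hsub : Set.uIcc a b ⊆ Set.uIcc (-1 : ℝ) 1 := by
    rw [Set.uIcc_of_le hab, Set.uIcc_of_le (by norm_num : (-1:ℝ) ≤ 1)]
    exact Set.Icc_subset_Icc hm1 hb
  have hint : IntervalIntegrable (fun s => 1 / Real.sqrt (1 + s)) volume a b :=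
    II_p.mono_set hsub
  have := intervalIntegral.integral_eq_sub_of_hasDeriv_right_of_le hab
    (f := fun s => 2 * Real.sqrt (1 + s)) (f' := fun s => 1 / Real.sqrt (1 + s))
    ((continuous_const.mul (Real.continuous_sqrt.comp (continuous_const.add continuous_id))).continuousOn)
    (fun s hs => by
      have h1s : (0:ℝ) < 1 + s := by
        rcases hs with ⟨h1, _⟩
        have : -1 < s := lt_of_le_of_lt hm1 h1
        linarith
      have h1 : HasDerivAt (fun u : ℝ => 1 + u) 1 s := by
        simpa using (hasDerivAt_id s).const_add 1
      have h2 := (Real.hasDerivAt_sqrt h1s.ne').comp s h1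
      have h3 := h2.const_mul (2:ℝ)
      have heq : 2 * (1 / (2 * Real.sqrt (1 + s)) * 1) = 1 / Real.sqrt (1 + s) := by
        have hsp : Real.sqrt (1 + s) ≠ 0 := (Real.sqrt_pos.2 h1s).ne'
        field_simp
      rw [heq] at h3
      exact h3.hasDerivWithinAt)
    hint
  rw [this]

lemma II_K : IntervalIntegrable (fun s => 1 / (Real.sqrt (1 - s) * Real.sqrt (1 + s)))
    volume (-1) 1 := by
  apply (II_m.add II_p).mono_fun
  · exact (measurable_const.div
      ((Real.continuous_sqrt.measurable.comp (measurable_const.sub measurable_id)).mul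
       (Real.continuous_sqrt.measurable.comp (measurable_const.add measurable_id)))).aestronglyMeasurable
  · refine Filter.Eventually.of_forall fun s => ?_
    have hR : 0 ≤ 1 / Real.sqrt (1 - s) + 1 / Real.sqrt (1 + s) := by positivity
    simp only [Real.norm_eq_abs]
    rw [abs_of_nonneg (by positivity), abs_of_nonneg hR]
    rcases le_or_gt s (-1) with hs | hs
    · rw [Real.sqrt_eq_zero'.2 (by linarith : (1:ℝ) + s ≤ 0)]
      simpa using hR
    rcases le_or_gt 1 s with hs' | hs'
    · rw [Real.sqrt_eq_zero'.2 (by linarith : (1:ℝ) - s ≤ 0)]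
      simpa using hR
    have ha : 0 < Real.sqrt (1 - s) := Real.sqrt_pos.2 (by linarith)
    have hb : 0 < Real.sqrt (1 + s) := Real.sqrt_pos.2 (by linarith)
    rw [div_add_div _ _ ha.ne' hb.ne']
    apply div_le_div₀ (by positivity) _ (by positivity) le_rfl
    have := sum_sqrt_ge_one hs hs'
    linarith

set_option maxHeartbeats 1000000 in
lemma key (k : ℕ) (g : ℝ → ℝ)
    (hg0 : ∀ x ∈ Set.Icc (-1:ℝ) 1, 0 ≤ g x)
    (hgmono : MonotoneOn g (Set.Icc (-1:ℝ) 1))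
    (hgconc : ConcaveOn ℝ (Set.Icc (-1:ℝ) 1) g)
    (W W' : ℝ → ℝ)
    (hW : ∀ x ∈ Set.Icc (-1:ℝ) 1,
      W x = ((k : ℝ) / π) * ∫ s in (-1:ℝ)..x, g s / Real.sqrt (1 - s ^ 2))
    (hW' : ∀ s : ℝ, W' s = (k : ℝ) * g s / (π * Real.sqrt (1 - s ^ 2)))
    (x t : ℝ) (hx : x ∈ Set.Icc (-1:ℝ) 1) (ht : t ∈ Set.Icc (-1:ℝ) 1) (hlt : x < t) :
    (1 / 4) * W' ((t + x) / 2) ≤ (W t - W x) / (t - x) ∧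
    (W t - W x) / (t - x) ≤ π * Real.sqrt 2 * W' ((t + x) / 2) := by
  obtain ⟨hx1, hx2⟩ := hx
  obtain ⟨ht1, ht2⟩ := ht
  set m : ℝ := (t + x) / 2 with hm
  have hxm : x < m := by rw [hm]; linarith
  have hmt : m < t := by rw [hm]; linarith
  have hm1 : -1 < m := lt_of_le_of_lt hx1 hxm
  have hm2 : m < 1 := lt_of_lt_of_le hmt ht2
  have hmI : m ∈ Set.Icc (-1:ℝ) 1 := ⟨hm1.le, hm2.le⟩
  have hDpos : 0 < Real.sqrt (1 - m ^ 2) := Real.sqrt_pos.2 (by nlinarith)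
  set D : ℝ := Real.sqrt (1 - m ^ 2) with hD
  have htx : (0:ℝ) < t - x := by linarith
  -- the truncated version of g
  set G : ℝ → ℝ := fun s => g (max (-1) (min 1 s)) with hG
  have hGmem : ∀ s : ℝ, max (-1) (min 1 s) ∈ Set.Icc (-1:ℝ) 1 :=
    fun s => ⟨le_max_left _ _, max_le (by norm_num) (min_le_left _ _)⟩
  have hGeq : ∀ s ∈ Set.Icc (-1:ℝ) 1, G s = g s := by
    intro s hs
    rw [hG]
    simp only [min_eq_right hs.2, max_eq_right hs.1]
  have hGmono : Monotone G := by
    intro a b hab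
    exact hgmono (hGmem a) (hGmem b)
      (max_le_max le_rfl (min_le_min le_rfl hab))
  have hG0 : ∀ s, 0 ≤ G s := fun s => hg0 _ (hGmem s)
  have hGle : ∀ s, G s ≤ g 1 := fun s =>
    hgmono (hGmem s) ⟨by norm_num, le_rfl⟩ (hGmem s).2
  set f : ℝ → ℝ := fun s => G s / Real.sqrt (1 - s ^ 2) with hf
  have hIf : IntervalIntegrable f volume (-1) 1 :=
    II_master hGmono.measurable hG0 hGle
  have hfnn : ∀ s, 0 ≤ f s := fun s => div_nonneg (hG0 s) (Real.sqrt_nonneg _)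
  have hsub : ∀ a b : ℝ, -1 ≤ a → a ≤ b → b ≤ 1 →
      Set.uIcc a b ⊆ Set.uIcc (-1:ℝ) 1 := by
    intro a b ha hab hb
    rw [Set.uIcc_of_le hab, Set.uIcc_of_le (by norm_num : (-1:ℝ) ≤ 1)]
    exact Set.Icc_subset_Icc ha hb
  -- difference of W as one integral
  have hWdiff : W t - W x = ((k:ℝ)/π) * ∫ s in x..t, f s := by
    have hcong : ∀ c, -1 ≤ c → c ≤ 1 →
        (∫ s in (-1:ℝ)..c, g s / Real.sqrt (1 - s ^ 2)) = ∫ s in (-1:ℝ)..c, f s := by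
      intro c hc1 hc2
      apply intervalIntegral.integral_congr
      intro s hs
      have hsI : s ∈ Set.Icc (-1:ℝ) 1 := by
        have := hsub (-1) c le_rfl hc1 hc2 hs
        rwa [Set.uIcc_of_le (by norm_num : (-1:ℝ) ≤ 1)] at this
      rw [hf]
      simp only [hGeq s hsI]
    have hsplit : (∫ s in (-1:ℝ)..t, f s) - ∫ s in (-1:ℝ)..x, f s = ∫ s in x..t, f s := by
      rw [← intervalIntegral.integral_add_adjacent_intervals
        (hIf.mono_set (hsub (-1) x le_rfl hx1 hx2))
        (hIf.mono_set (hsub x t hx1 hlt.le ht2))]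
      ring
    rw [hW t ⟨ht1, ht2⟩, hW x ⟨hx1, hx2⟩, hcong t ht1 ht2, hcong x hx1 hx2, ← mul_sub, hsplit]
  set I : ℝ := ∫ s in x..t, f s with hI
  have hIfxm : IntervalIntegrable f volume x m :=
    hIf.mono_set (hsub x m hx1 hxm.le hm2.le)
  have hIfmt : IntervalIntegrable f volume m t :=
    hIf.mono_set (hsub m t hm1.le hmt.le ht2)
  have hIsplit : I = (∫ s in x..m, f s) + ∫ s in m..t, f s :=
    (intervalIntegral.integral_add_adjacent_intervals hIfxm hIfmt).symm
  have hgm0 : 0 ≤ g m := hg0 m hmI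
  -- LOWER BOUND on I
  have hIlow : (t - x) / 4 * (g m / D) ≤ I := by
    have hgD : 0 ≤ g m / D := div_nonneg hgm0 hDpos.le
    rcases le_or_gt 0 m with hm0 | hm0
    · -- m ≥ 0 case
      have h2 : 0 ≤ ∫ s in x..m, f s :=
        intervalIntegral.integral_nonneg hxm.le (fun s _ => hfnn s)
      have h1 : (t - m) * (g m / D) ≤ ∫ s in m..t, f s := by
        have hpt : ∀ s ∈ Set.Ioo m t, g m / D ≤ f s := by
          intro s hs
          obtain ⟨hs1, hs2⟩ := hs
          have hsI : s ∈ Set.Icc (-1:ℝ) 1 := ⟨by linarith, by linarith⟩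
          have hfs : f s = g s / Real.sqrt (1 - s ^ 2) := by
            rw [hf]; simp only [hGeq s hsI]
          rw [hfs]
          have hs2' : s < 1 := lt_of_lt_of_le hs2 ht2
          have hsp : 0 < Real.sqrt (1 - s ^ 2) := Real.sqrt_pos.2 (by nlinarith)
          have hle : Real.sqrt (1 - s ^ 2) ≤ D := by
            rw [hD]; exact Real.sqrt_le_sqrt (by nlinarith)
          exact div_le_div₀ (hg0 s hsI) (hgmono hmI hsI hs1.le) hsp hle
        calc (t - m) * (g m / D) = ∫ _s in Set.Ioo m t, (g m / D) := by
              rw [MeasureTheory.setIntegral_const, Real.volume_real_Ioo_of_le (by linarith),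
                smul_eq_mul]
          _ ≤ ∫ s in Set.Ioo m t, f s := by
              apply MeasureTheory.setIntegral_mono_on
              · exact integrableOn_const (by rw [Real.volume_Ioo]; exact ENNReal.ofReal_ne_top)
              · exact (hIfmt.1).mono_set Set.Ioo_subset_Ioc_self
              · exact measurableSet_Ioo
              · exact hpt
          _ = ∫ s in m..t, f s := by
              rw [intervalIntegral.integral_of_le hmt.le,
                MeasureTheory.integral_Ioc_eq_integral_Ioo]
      rw [hIsplit]
      have htm : t - m = (t - x)/2 := by rw [hm]; ring
      nlinarith
    · -- m < 0 case, chord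
      have hmx : 0 < m - x := by linarith
      set L : ℝ → ℝ := fun s => ((m - s) * g x + (s - x) * g m) / (m - x) with hL
      have hLcont : Continuous L := by fun_prop
      have hchord : ∀ s ∈ Set.Icc x m, L s ≤ g s := by
        intro s hs
        obtain ⟨hs1, hs2⟩ := hs
        have ha : 0 ≤ (m - s)/(m - x) := div_nonneg (by linarith) hmx.le
        have hb : 0 ≤ (s - x)/(m - x) := div_nonneg (by linarith) hmx.le
        have hab : (m - s)/(m - x) + (s - x)/(m - x) = 1 := by field_simp; ring
        have hcomb := hgconc.2 ⟨hx1, hx2⟩ hmI ha hb hab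
        have hxs : ((m - s)/(m - x)) • x + ((s - x)/(m - x)) • m = s := by
          simp only [smul_eq_mul]
          field_simp
          ring
        rw [hxs] at hcomb
        calc L s = ((m - s)/(m - x)) * g x + ((s - x)/(m - x)) * g m := by
              rw [hL]; field_simp
          _ ≤ g s := by simpa [smul_eq_mul] using hcomb
      have h1 : (∫ s in x..m, L s / D) ≤ ∫ s in x..m, f s := by
        have hpt : ∀ s ∈ Set.Ioo x m, L s / D ≤ f s := by
          intro s hs
          obtain ⟨hs1, hs2⟩ := hs
          have hsI : s ∈ Set.Icc (-1:ℝ) 1 := ⟨by linarith, by linarith⟩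
          have hfs : f s = g s / Real.sqrt (1 - s ^ 2) := by
            rw [hf]; simp only [hGeq s hsI]
          rw [hfs]
          have hs1' : -1 < s := lt_of_le_of_lt hx1 hs1
          have hsp : 0 < Real.sqrt (1 - s ^ 2) := Real.sqrt_pos.2 (by nlinarith)
          have hle : Real.sqrt (1 - s ^ 2) ≤ D := by
            rw [hD]; exact Real.sqrt_le_sqrt (by nlinarith)
          exact div_le_div₀ (hg0 s hsI) (hchord s ⟨hs1.le, hs2.le⟩) hsp hle
        calc (∫ s in x..m, L s / D) = ∫ s in Set.Ioo x m, L s / D := by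
              rw [intervalIntegral.integral_of_le hxm.le,
                MeasureTheory.integral_Ioc_eq_integral_Ioo]
          _ ≤ ∫ s in Set.Ioo x m, f s := MeasureTheory.setIntegral_mono_on
              (((hLcont.div_const D).integrableOn_Icc).mono_set Set.Ioo_subset_Icc_self)
              ((hIfxm.1).mono_set Set.Ioo_subset_Ioc_self) measurableSet_Ioo hpt
          _ = ∫ s in x..m, f s := by
              rw [intervalIntegral.integral_of_le hxm.le,
                MeasureTheory.integral_Ioc_eq_integral_Ioo]
      have hLint : ∫ s in x..m, L s = (m - x) * (g x + g m) / 2 := by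
        have heq : ∀ s : ℝ, L s
            = (g x * m - g m * x)/(m - x) + ((g m - g x)/(m - x)) * s := by
          intro s; rw [hL]; field_simp; ring
        rw [intervalIntegral.integral_congr
          (g := fun s => (g x * m - g m * x)/(m - x) + ((g m - g x)/(m - x)) * s)
          (fun s _ => heq s)]
        rw [intervalIntegral.integral_add intervalIntegrable_const
          (intervalIntegral.intervalIntegrable_id.const_mul _)]
        rw [intervalIntegral.integral_const, intervalIntegral.integral_const_mul,
          integral_id, smul_eq_mul]
        field_simp
        ring
      have h2 : 0 ≤ ∫ s in m..t, f s :=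
        intervalIntegral.integral_nonneg hmt.le (fun s _ => hfnn s)
      have hdiv : (∫ s in x..m, L s / D) = ((m - x) * (g x + g m) / 2) / D := by
        rw [intervalIntegral.integral_div, hLint]
      rw [hdiv] at h1
      have hmx2 : m - x = (t - x)/2 := by rw [hm]; ring
      have hgx0 : 0 ≤ g x := hg0 x ⟨hx1, hx2⟩
      have hkey : (t - x)/4 * (g m / D) ≤ ((m - x) * (g x + g m) / 2) / D := by
        rw [show (t - x)/4 * (g m / D) = ((t - x)/4 * g m)/D by ring,
          show (m - x) * (g x + g m) / 2 = (t - x)/4 * g x + (t - x)/4 * g m by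
            rw [hmx2]; ring]
        exact div_le_div₀ (by positivity) (by nlinarith) hDpos le_rfl
      rw [hIsplit]
      linarith
  -- UPPER BOUND on I
  have hIup : I ≤ 4 * (t - x) * (g m / D) := by
    set K : ℝ → ℝ := fun s => 1 / (Real.sqrt (1 - s) * Real.sqrt (1 + s)) with hK
    have hIKxm : IntervalIntegrable K volume x m :=
      II_K.mono_set (hsub x m hx1 hxm.le hm2.le)
    have hIKmt : IntervalIntegrable K volume m t :=
      II_K.mono_set (hsub m t hm1.le hmt.le ht2)
    have hsq1pm : 0 < Real.sqrt (1 + m) := Real.sqrt_pos.2 (by linarith)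
    have hsq1mm : 0 < Real.sqrt (1 - m) := Real.sqrt_pos.2 (by linarith)
    have hDmul : D = Real.sqrt (1 - m) * Real.sqrt (1 + m) := by
      rw [hD, show (1:ℝ) - m ^ 2 = (1 - m) * (1 + m) by ring,
        Real.sqrt_mul (by linarith)]
    have hgt2 : g t ≤ 2 * g m := by
      have hcomb := hgconc.2 ⟨hx1, hx2⟩ ⟨ht1, ht2⟩
        (by norm_num : (0:ℝ) ≤ 1/2) (by norm_num : (0:ℝ) ≤ 1/2) (by norm_num)
      have hmid : ((1:ℝ)/2) • x + ((1:ℝ)/2) • t = m := by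
        simp only [smul_eq_mul]; rw [hm]; ring
      rw [hmid] at hcomb
      simp only [smul_eq_mul] at hcomb
      have := hg0 x ⟨hx1, hx2⟩
      linarith
    have step1 : I ≤ 2 * g m * ((∫ s in x..m, K s) + ∫ s in m..t, K s) := by
      have hsplitK : (∫ s in x..m, K s) + ∫ s in m..t, K s = ∫ s in x..t, K s :=
        intervalIntegral.integral_add_adjacent_intervals hIKxm hIKmt
      rw [hsplitK]
      have hpt : ∀ s ∈ Set.Ioo x t, f s ≤ 2 * g m * K s := by
        intro s hs
        obtain ⟨hs1, hs2⟩ := hs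
        have hs1' : -1 < s := lt_of_le_of_lt hx1 hs1
        have hs2' : s < 1 := lt_of_lt_of_le hs2 ht2
        have hsI : s ∈ Set.Icc (-1:ℝ) 1 := ⟨hs1'.le, hs2'.le⟩
        have hfs : f s = g s / Real.sqrt (1 - s ^ 2) := by
          rw [hf]; simp only [hGeq s hsI]
        have ha : 0 < Real.sqrt (1 - s) := Real.sqrt_pos.2 (by linarith)
        have hb : 0 < Real.sqrt (1 + s) := Real.sqrt_pos.2 (by linarith)
        have hsq : Real.sqrt (1 - s ^ 2) = Real.sqrt (1 - s) * Real.sqrt (1 + s) := by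
          rw [show (1:ℝ) - s ^ 2 = (1 - s) * (1 + s) by ring, Real.sqrt_mul (by linarith)]
        rw [hfs, hsq, hK]
        have hgs : g s ≤ 2 * g m := le_trans (hgmono hsI ⟨ht1, ht2⟩ hs2.le) hgt2
        calc g s / (Real.sqrt (1 - s) * Real.sqrt (1 + s))
            ≤ (2 * g m) / (Real.sqrt (1 - s) * Real.sqrt (1 + s)) :=
              div_le_div₀ (by linarith [hg0 s hsI]) hgs (by positivity) le_rfl
          _ = 2 * g m * (1 / (Real.sqrt (1 - s) * Real.sqrt (1 + s))) := by ring
      calc I = ∫ s in Set.Ioo x t, f s := by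
            rw [hI, intervalIntegral.integral_of_le hlt.le,
              MeasureTheory.integral_Ioc_eq_integral_Ioo]
        _ ≤ ∫ s in Set.Ioo x t, 2 * g m * K s := MeasureTheory.setIntegral_mono_on
            (((hIf.mono_set (hsub x t hx1 hlt.le ht2)).1).mono_set Set.Ioo_subset_Ioc_self)
            ((((II_K.mono_set (hsub x t hx1 hlt.le ht2)).const_mul (2 * g m)).1).mono_set
              Set.Ioo_subset_Ioc_self)
            measurableSet_Ioo hpt
        _ = 2 * g m * ∫ s in Set.Ioo x t, K s := MeasureTheory.integral_const_mul _ _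
        _ = 2 * g m * ∫ s in x..t, K s := by
            rw [intervalIntegral.integral_of_le hlt.le,
              MeasureTheory.integral_Ioc_eq_integral_Ioo]
    have hJp : ∫ s in m..t, K s ≤ 2 * (t - m) / D := by
      have hpt : ∀ s ∈ Set.Ioo m t,
          K s ≤ (1 / Real.sqrt (1 + m)) * (1 / Real.sqrt (1 - s)) := by
        intro s hs
        obtain ⟨hs1, hs2⟩ := hs
        have hs2' : s < 1 := lt_of_lt_of_le hs2 ht2
        have ha : 0 < Real.sqrt (1 - s) := Real.sqrt_pos.2 (by linarith)
        rw [hK, show (1 / Real.sqrt (1 + m)) * (1 / Real.sqrt (1 - s))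
            = 1 / (Real.sqrt (1 - s) * Real.sqrt (1 + m)) by
          rw [one_div_mul_one_div]; ring_nf]
        exact one_div_le_one_div_of_le (mul_pos ha hsq1pm)
          (mul_le_mul_of_nonneg_left (Real.sqrt_le_sqrt (by linarith)) ha.le)
      have hptint : IntervalIntegrable
          (fun s => (1 / Real.sqrt (1 + m)) * (1 / Real.sqrt (1 - s))) volume m t :=
        (II_m.mono_set (hsub m t hm1.le hmt.le ht2)).const_mul _
      have hbound : 2 * Real.sqrt (1 - m) - 2 * Real.sqrt (1 - t)
          ≤ 2 * (t - m) / Real.sqrt (1 - m) := by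
        rw [le_div_iff₀ hsq1mm]
        nlinarith [Real.sq_sqrt (by linarith : (0:ℝ) ≤ 1 - m),
          Real.sq_sqrt (by linarith : (0:ℝ) ≤ 1 - t),
          mul_le_mul_of_nonneg_right
            (Real.sqrt_le_sqrt (by linarith : 1 - t ≤ 1 - m)) (Real.sqrt_nonneg (1 - t))]
      calc ∫ s in m..t, K s = ∫ s in Set.Ioo m t, K s := by
            rw [intervalIntegral.integral_of_le hmt.le,
              MeasureTheory.integral_Ioc_eq_integral_Ioo]
        _ ≤ ∫ s in Set.Ioo m t, (1 / Real.sqrt (1 + m)) * (1 / Real.sqrt (1 - s)) :=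
            MeasureTheory.setIntegral_mono_on (hIKmt.1.mono_set Set.Ioo_subset_Ioc_self)
              (hptint.1.mono_set Set.Ioo_subset_Ioc_self) measurableSet_Ioo hpt
        _ = ∫ s in m..t, (1 / Real.sqrt (1 + m)) * (1 / Real.sqrt (1 - s)) := by
            rw [intervalIntegral.integral_of_le hmt.le,
              MeasureTheory.integral_Ioc_eq_integral_Ioo]
        _ = (1 / Real.sqrt (1 + m)) * (2 * Real.sqrt (1 - m) - 2 * Real.sqrt (1 - t)) := by
            rw [intervalIntegral.integral_const_mul, ftc_m hm1.le hmt.le ht2]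
        _ ≤ (1 / Real.sqrt (1 + m)) * (2 * (t - m) / Real.sqrt (1 - m)) :=
            mul_le_mul_of_nonneg_left hbound (by positivity)
        _ = 2 * (t - m) / D := by
            rw [one_div_mul_eq_div, div_div, ← hDmul]
    have hJm : ∫ s in x..m, K s ≤ 2 * (m - x) / D := by
      have hpt : ∀ s ∈ Set.Ioo x m,
          K s ≤ (1 / Real.sqrt (1 - m)) * (1 / Real.sqrt (1 + s)) := by
        intro s hs
        obtain ⟨hs1, hs2⟩ := hs
        have hs1' : -1 < s := lt_of_le_of_lt hx1 hs1
        have hb : 0 < Real.sqrt (1 + s) := Real.sqrt_pos.2 (by linarith)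
        rw [hK, show (1 / Real.sqrt (1 - m)) * (1 / Real.sqrt (1 + s))
            = 1 / (Real.sqrt (1 - m) * Real.sqrt (1 + s)) by
          rw [one_div_mul_one_div]]
        exact one_div_le_one_div_of_le (mul_pos hsq1mm hb)
          (mul_le_mul_of_nonneg_right (Real.sqrt_le_sqrt (by linarith)) hb.le)
      have hptint : IntervalIntegrable
          (fun s => (1 / Real.sqrt (1 - m)) * (1 / Real.sqrt (1 + s))) volume x m :=
        (II_p.mono_set (hsub x m hx1 hxm.le hm2.le)).const_mul _
      have hbound : 2 * Real.sqrt (1 + m) - 2 * Real.sqrt (1 + x)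
          ≤ 2 * (m - x) / Real.sqrt (1 + m) := by
        rw [le_div_iff₀ hsq1pm]
        nlinarith [Real.sq_sqrt (by linarith : (0:ℝ) ≤ 1 + m),
          Real.sq_sqrt (by linarith : (0:ℝ) ≤ 1 + x),
          mul_le_mul_of_nonneg_right
            (Real.sqrt_le_sqrt (by linarith : 1 + x ≤ 1 + m)) (Real.sqrt_nonneg (1 + x))]
      calc ∫ s in x..m, K s = ∫ s in Set.Ioo x m, K s := by
            rw [intervalIntegral.integral_of_le hxm.le,
              MeasureTheory.integral_Ioc_eq_integral_Ioo]
        _ ≤ ∫ s in Set.Ioo x m, (1 / Real.sqrt (1 - m)) * (1 / Real.sqrt (1 + s)) :=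
            MeasureTheory.setIntegral_mono_on (hIKxm.1.mono_set Set.Ioo_subset_Ioc_self)
              (hptint.1.mono_set Set.Ioo_subset_Ioc_self) measurableSet_Ioo hpt
        _ = ∫ s in x..m, (1 / Real.sqrt (1 - m)) * (1 / Real.sqrt (1 + s)) := by
            rw [intervalIntegral.integral_of_le hxm.le,
              MeasureTheory.integral_Ioc_eq_integral_Ioo]
        _ = (1 / Real.sqrt (1 - m)) * (2 * Real.sqrt (1 + m) - 2 * Real.sqrt (1 + x)) := by
            rw [intervalIntegral.integral_const_mul, ftc_p hx1 hxm.le hm2.le]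
        _ ≤ (1 / Real.sqrt (1 - m)) * (2 * (m - x) / Real.sqrt (1 + m)) :=
            mul_le_mul_of_nonneg_left hbound (by positivity)
        _ = 2 * (m - x) / D := by
            rw [one_div_mul_eq_div, div_div,
              mul_comm (Real.sqrt (1 + m)) (Real.sqrt (1 - m)), ← hDmul]
    calc I ≤ 2 * g m * ((∫ s in x..m, K s) + ∫ s in m..t, K s) := step1
      _ ≤ 2 * g m * (2 * (m - x) / D + 2 * (t - m) / D) :=
          mul_le_mul_of_nonneg_left (add_le_add hJm hJp) (by linarith)
      _ = 4 * (t - x) * (g m / D) := by ring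
  -- assemble
  have hkπ : (0:ℝ) ≤ (k:ℝ) / π := div_nonneg (Nat.cast_nonneg k) pi_pos.le
  rw [hW' m, hWdiff]
  constructor
  · rw [le_div_iff₀ htx]
    calc (1:ℝ)/4 * ((k:ℝ) * g m / (π * D)) * (t - x)
        = ((k:ℝ)/π) * ((t - x) / 4 * (g m / D)) := by ring
      _ ≤ ((k:ℝ)/π) * I := mul_le_mul_of_nonneg_left hIlow hkπ
  · rw [div_le_iff₀ htx]
    have hF : (0:ℝ) ≤ (k:ℝ) * g m * (t - x) / D := by positivity
    have h42 : (4:ℝ) / π ≤ Real.sqrt 2 := by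
      rw [div_le_iff₀ pi_pos]
      have h2 : (1.4:ℝ) ≤ Real.sqrt 2 := by
        nlinarith [Real.sq_sqrt (by norm_num : (0:ℝ) ≤ 2), Real.sqrt_nonneg 2]
      nlinarith [pi_gt_three]
    calc ((k:ℝ)/π) * I ≤ ((k:ℝ)/π) * (4 * (t - x) * (g m / D)) :=
          mul_le_mul_of_nonneg_left hIup hkπ
      _ = 4 / π * ((k:ℝ) * g m * (t - x) / D) := by ring
      _ ≤ Real.sqrt 2 * ((k:ℝ) * g m * (t - x) / D) :=
          mul_le_mul_of_nonneg_right h42 hF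
      _ = π * Real.sqrt 2 * ((k:ℝ) * g m / (π * D)) * (t - x) := by
          field_simp

end Helpers

theorem stmt_1 (k : ℕ) (hk : 2 ≤ k) (g : ℝ → ℝ)
    (hg0 : ∀ x ∈ Set.Icc (-1:ℝ) 1, 0 ≤ g x)
    (hgmono : MonotoneOn g (Set.Icc (-1:ℝ) 1))
    (hgconc : ConcaveOn ℝ (Set.Icc (-1:ℝ) 1) g)
    (hgconv : ConvexOn ℝ (Set.Ioo (-1:ℝ) 1) (fun s => g s / (1 + s)))
    (hnorm : (1 / π) * ∫ s in (-1:ℝ)..1, g s / Real.sqrt (1 - s ^ 2) = 1)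
    (W W' : ℝ → ℝ)
    (hW : ∀ x ∈ Set.Icc (-1:ℝ) 1,
      W x = ((k : ℝ) / π) * ∫ s in (-1:ℝ)..x, g s / Real.sqrt (1 - s ^ 2))
    (hW' : ∀ s : ℝ, W' s = (k : ℝ) * g s / (π * Real.sqrt (1 - s ^ 2)))
    (x t : ℝ) (hx : x ∈ Set.Icc (-1:ℝ) 1) (ht : t ∈ Set.Icc (-1:ℝ) 1) (hxt : x ≠ t) :
    (1 / 4) * W' ((t + x) / 2) ≤ (W t - W x) / (t - x) ∧
    (W t - W x) / (t - x) ≤ π * Real.sqrt 2 * W' ((t + x) / 2) := by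
  rcases lt_or_gt_of_ne hxt with hlt | hlt
  · exact key k g hg0 hgmono hgconc W W' hW hW' x t hx ht hlt
  · have h := key k g hg0 hgmono hgconc W W' hW hW' t x ht hx hlt
    have e1 : (W x - W t) / (x - t) = (W t - W x) / (t - x) := by
      rw [← neg_sub (W t) (W x), ← neg_sub t x, neg_div_neg_eq]
    have e2 : (x + t) / 2 = (t + x) / 2 := by ring
    rw [e1, e2] at h
    exact h
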